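/- For all real t > 0 and p ≥ 0, the integral ∫₀^∞ exp(-p·x - t·coth(x)) / (sinh(x))^{2+p} dx equals Γ(1+p) · e^{-t} / t^{1+p}. -/

import Mathlib

open Real MeasureTheory

lemma coth_eq_aux {x : ℝ} (hx : 0 < x) :
    Real.cosh x / Real.sinh x = 1 + 2 / (Real.exp x ^ 2 - 1) := by
  have h1 : 1 < Real.exp x := Real.one_lt_exp_iff.mpr hx
  have h2 : Real.exp x ^ 2 - 1 ≠ 0 := by nlinarith
  have hs : Real.sinh x ≠ 0 := (Real.sinh_pos_iff.mpr hx).ne'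
  have he : Real.exp x ≠ 0 := (Real.exp_pos x).ne'
  rw [Real.cosh_eq, Real.sinh_eq, Real.exp_neg]
  rw [Real.sinh_eq, Real.exp_neg] at hs
  field_simp at hs ⊢
  ring_nf

lemma coth_injOn : Set.InjOn (fun x => Real.cosh x / Real.sinh x) (Set.Ioi (0:ℝ)) := by
  intro a ha b hb hab
  simp only [Set.mem_Ioi] at ha hb
  simp only [coth_eq_aux ha, coth_eq_aux hb] at hab
  have h1a : 1 < Real.exp a := Real.one_lt_exp_iff.mpr ha
  have h1b : 1 < Real.exp b := Real.one_lt_exp_iff.mpr hb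
  have h2a : Real.exp a ^ 2 - 1 ≠ 0 := by nlinarith
  have h2b : Real.exp b ^ 2 - 1 ≠ 0 := by nlinarith
  have : Real.exp a ^ 2 = Real.exp b ^ 2 := by
    field_simp at hab; nlinarith [hab]
  have : Real.exp a = Real.exp b := by nlinarith [Real.exp_pos a, Real.exp_pos b]
  exact Real.exp_injective this

lemma coth_image : (fun x => Real.cosh x / Real.sinh x) '' (Set.Ioi (0:ℝ)) = Set.Ioi (1:ℝ) := by
  ext y
  constructor
  · rintro ⟨x, hx, rfl⟩
    simp only [Set.mem_Ioi] at hx ⊢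
    have h1 : 1 < Real.exp x := Real.one_lt_exp_iff.mpr hx
    have h2 : (0:ℝ) < Real.exp x ^ 2 - 1 := by nlinarith
    rw [coth_eq_aux hx]
    have : 0 < 2 / (Real.exp x ^ 2 - 1) := by positivity
    linarith
  · intro hy
    simp only [Set.mem_Ioi] at hy
    have hy1 : 0 < y - 1 := by linarith
    have hr : (1:ℝ) < (y+1)/(y-1) := by
      rw [lt_div_iff₀ hy1]; linarith
    refine ⟨Real.log ((y+1)/(y-1)) / 2, ?_, ?_⟩
    · simp only [Set.mem_Ioi]
      have := Real.log_pos hr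
      linarith
    · set x := Real.log ((y+1)/(y-1)) / 2 with hxdef
      have hx : 0 < x := by have := Real.log_pos hr; simp only [hxdef]; linarith
      show Real.cosh x / Real.sinh x = y
      rw [coth_eq_aux hx]
      have hex : Real.exp x ^ 2 = (y+1)/(y-1) := by
        rw [sq, ← Real.exp_add, hxdef]
        rw [show Real.log ((y+1)/(y-1)) / 2 + Real.log ((y+1)/(y-1)) / 2
              = Real.log ((y+1)/(y-1)) by ring]
        exact Real.exp_log (by positivity)
      rw [hex, show (y+1)/(y-1) - 1 = 2/(y-1) by field_simp; ring]
      rw [div_div_eq_mul_div, mul_comm, mul_div_assoc, div_self (by norm_num : (2:ℝ) ≠ 0)]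
      ring

lemma coth_hasDerivAt {x : ℝ} (hx : 0 < x) :
    HasDerivAt (fun x => Real.cosh x / Real.sinh x) (-(Real.sinh x ^ 2)⁻¹) x := by
  have hs : Real.sinh x ≠ 0 := (Real.sinh_pos_iff.mpr hx).ne'
  have h := (Real.hasDerivAt_cosh x).div (Real.hasDerivAt_sinh x) hs
  refine h.congr_deriv ?_
  have := Real.cosh_sq x
  field_simp
  nlinarith [this]

lemma add_one_image : (fun u : ℝ => u + 1) '' (Set.Ioi (0:ℝ)) = Set.Ioi (1:ℝ) := by
  ext y
  simp only [Set.mem_image, Set.mem_Ioi]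
  constructor
  · rintro ⟨u, hu, rfl⟩; linarith
  · intro hy; exact ⟨y - 1, by linarith, by ring⟩

theorem besq_coth_integral (t p : ℝ) (ht : 0 < t) (hp : 0 ≤ p) :
    ∫ x in Set.Ioi (0 : ℝ),
        Real.exp (-p * x - t * (Real.cosh x / Real.sinh x)) / (Real.sinh x) ^ (2 + p)
      = Real.Gamma (1 + p) * Real.exp (-t) / t ^ (1 + p) := by
  set g : ℝ → ℝ := fun y => (y - 1) ^ p * Real.exp (-(t * y)) with hgdef
  have h1 : ∫ y in Set.Ioi (1:ℝ), g y
      = ∫ x in Set.Ioi (0:ℝ), Real.exp (-p * x - t * (Real.cosh x / Real.sinh x))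
          / (Real.sinh x) ^ (2 + p) := by
    rw [← coth_image, integral_image_eq_integral_abs_deriv_smul measurableSet_Ioi
        (fun x hx => (coth_hasDerivAt (Set.mem_Ioi.mp hx)).hasDerivWithinAt) coth_injOn g]
    refine setIntegral_congr_fun measurableSet_Ioi (fun x hx => ?_)
    simp only [Set.mem_Ioi] at hx
    have hs : 0 < Real.sinh x := Real.sinh_pos_iff.mpr hx
    have hc : Real.cosh x / Real.sinh x - 1 = Real.exp (-x) / Real.sinh x := by
      rw [div_sub_one hs.ne', Real.cosh_sub_sinh]
    have habs : |(-(Real.sinh x ^ 2)⁻¹)| = (Real.sinh x ^ 2)⁻¹ := by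
      rw [abs_neg, abs_of_pos (by positivity)]
    simp only [smul_eq_mul, habs, hgdef, hc]
    rw [Real.div_rpow (Real.exp_nonneg _) hs.le, ← Real.exp_mul,
      show -p * x - t * (Real.cosh x / Real.sinh x)
        = -x * p + -(t * (Real.cosh x / Real.sinh x)) by ring,
      Real.exp_add, Real.rpow_add hs,
      show (2:ℝ) = ((2:ℕ):ℝ) by norm_num, Real.rpow_natCast]
    have hsp : 0 < Real.sinh x ^ p := Real.rpow_pos_of_pos hs p
    field_simp
  have h2 : ∫ y in Set.Ioi (1:ℝ), g y
      = (∫ u in Set.Ioi (0:ℝ), u ^ p * Real.exp (-(t * u))) * Real.exp (-t) := by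
    rw [← add_one_image, integral_image_eq_integral_abs_deriv_smul (f' := fun _ => (1:ℝ))
        measurableSet_Ioi
        (fun u _ => (by simpa using (hasDerivAt_id u).add_const 1 : HasDerivAt (fun u : ℝ => u + 1) 1 u).hasDerivWithinAt)
        (fun a _ b _ h => by simpa using h) g, ← integral_mul_const]
    refine setIntegral_congr_fun measurableSet_Ioi (fun u hu => ?_)
    simp only [smul_eq_mul, abs_one, one_mul, hgdef, add_sub_cancel_right]
    rw [show -(t * (u + 1)) = -(t * u) + -t by ring, Real.exp_add]
    ring
  rw [← h1, h2]
  have h3 : ∫ u in Set.Ioi (0:ℝ), u ^ p * Real.exp (-(t * u))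
      = (1 / t) ^ (1 + p) * Real.Gamma (1 + p) := by
    rw [← Real.integral_rpow_mul_exp_neg_mul_Ioi (by linarith : (0:ℝ) < 1 + p) ht]
    refine setIntegral_congr_fun measurableSet_Ioi (fun u _ => ?_)
    norm_num
  rw [h3, one_div, Real.inv_rpow ht.le, div_eq_mul_inv]
  ring
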